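/- In the (k,k)-cylindrical grid C_k^k, for every partition of the outermost cycle's vertex set C^k into two nonempty arcs X₁ and X₂ (each consisting of cyclically consecutive vertices), the maximum number of pairwise vertex-disjoint paths between X₁ and X₂ equals min(|X₁|, |X₂|). -/

import Mathlib

/-- The `(k,m)`-cylindrical grid. -/
def cylGrid (k m : ℕ) : SimpleGraph (Fin k × Fin m) where
  Adj p q := p ≠ q ∧
    ((p.2 = q.2 ∧ (((p.1 : ℕ) + 1) % k = (q.1 : ℕ) ∨ ((q.1 : ℕ) + 1) % k = (p.1 : ℕ))) ∨
      (p.1 = q.1 ∧ ((p.2 : ℕ) + 1 = (q.2 : ℕ) ∨ (q.2 : ℕ) + 1 = (p.2 : ℕ))))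
  symm := by
    constructor
    rintro p q ⟨hne, h⟩
    refine ⟨hne.symm, ?_⟩
    rcases h with ⟨h1, h2⟩ | ⟨h1, h2⟩
    · exact Or.inl ⟨h1.symm, h2.symm⟩
    · exact Or.inr ⟨h1.symm, h2.symm⟩
  loopless := ⟨fun p h => h.1 rfl⟩

/-- There are `n` pairwise vertex-disjoint `(X,Y)`-paths in `G`. -/
def DisjointPathFamily {V : Type} (G : SimpleGraph V) (X Y : Set V) (n : ℕ) : Prop :=
  ∃ (s t : Fin n → V) (P : ∀ i, G.Walk (s i) (t i)),
    (∀ i, s i ∈ X) ∧ (∀ i, t i ∈ Y) ∧ (∀ i, (P i).IsPath) ∧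
      ∀ i j, i ≠ j → ∀ x, x ∈ (P i).support → x ∉ (P j).support

/-- `μ_G(X,Y)`: the maximum number of pairwise vertex-disjoint `(X,Y)`-paths. -/
noncomputable def mu {V : Type} (G : SimpleGraph V) (X Y : Set V) : ℕ :=
  sSup {n | DisjointPathFamily G X Y n}

/-- An arc of angular positions: a set of cyclically consecutive elements of `Fin k`. -/
def IsArc {k : ℕ} (X : Finset (Fin k)) : Prop :=
  ∃ (st : Fin k) (len : ℕ),
    X = (Finset.range len).image fun o => (⟨((st : ℕ) + o) % k, Nat.mod_lt _ st.pos⟩ : Fin k)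

private lemma modcancel {k st a b : ℕ} (ha : a < k) (hb : b < k)
    (h : (st + a) % k = (st + b) % k) : a = b := by
  have h' : a ≡ b [MOD k] := Nat.ModEq.add_left_cancel' st h
  unfold Nat.ModEq at h'
  rwa [Nat.mod_eq_of_lt ha, Nat.mod_eq_of_lt hb] at h'

private lemma mod_succ (a k : ℕ) (hk : 3 ≤ k) : (a % k + 1) % k = (a + 1) % k := by
  rw [Nat.add_mod a 1 k, Nat.mod_eq_of_lt (show 1 < k by omega)]

def walkOfFn {V : Type} (G : SimpleGraph V) (f : ℕ → V) :
    ∀ n : ℕ, (∀ t, t < n → G.Adj (f t) (f (t+1))) → G.Walk (f 0) (f n)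
  | 0, _ => SimpleGraph.Walk.nil
  | n+1, h => (walkOfFn G f n (fun t ht => h t (by omega))).concat (h n (by omega))

lemma walkOfFn_support {V : Type} (G : SimpleGraph V) (f : ℕ → V) :
    ∀ (n : ℕ) (h : ∀ t, t < n → G.Adj (f t) (f (t+1))),
      (walkOfFn G f n h).support = (List.range (n+1)).map f
  | 0, _ => by simp [walkOfFn, List.range_succ]
  | n+1, h => by
    rw [walkOfFn, SimpleGraph.Walk.support_concat, walkOfFn_support G f n _,
      List.range_succ (n := n+1)]
    simp

def offFn (m₁ i t : ℕ) : ℕ :=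
  if t ≤ i then m₁ - 1 - i else if t ≤ 3*i+1 then (m₁ - 1 - i) + (t - i) else m₁ + i

def ringFn (k i t : ℕ) : ℕ :=
  if t ≤ i then k - 1 - t else if t ≤ 3*i+1 then k - 1 - i else (k - 1 - i) + (t - (3*i+1))

def pv (k st m₁ : ℕ) (hk : 3 ≤ k) (i t : ℕ) : Fin k × Fin k :=
  (⟨(st + offFn m₁ i t) % k, Nat.mod_lt _ (by omega)⟩,
   ⟨ringFn k i t % k, Nat.mod_lt _ (by omega)⟩)

lemma off_lt {k m₁ i : ℕ} (t : ℕ) (hi : i < min m₁ (k - m₁)) : offFn m₁ i t < k := by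
  unfold offFn; split_ifs <;> omega

lemma ring_lt {k m₁ i t : ℕ} (hk : 3 ≤ k) (hi : i < min m₁ (k - m₁)) (ht : t ≤ 4*i+1) :
    ringFn k i t < k := by
  unfold ringFn; split_ifs <;> omega

lemma pv_inj {k st m₁ : ℕ} (hk : 3 ≤ k) {i j t s : ℕ}
    (hi : i < min m₁ (k - m₁)) (hj : j < min m₁ (k - m₁))
    (ht : t ≤ 4*i+1) (hs : s ≤ 4*j+1)
    (h : pv k st m₁ hk i t = pv k st m₁ hk j s) : i = j ∧ t = s := by
  rw [Prod.ext_iff] at h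
  obtain ⟨ho, hr⟩ := h
  simp only [pv, Fin.mk.injEq] at ho hr
  have ho' : offFn m₁ i t = offFn m₁ j s := modcancel (off_lt t hi) (off_lt s hj) ho
  rw [Nat.mod_eq_of_lt (ring_lt hk hi ht), Nat.mod_eq_of_lt (ring_lt hk hj hs)] at hr
  unfold offFn at ho'; unfold ringFn at hr
  split_ifs at ho' hr <;> omega

lemma pv_adj {k st m₁ : ℕ} (hk : 3 ≤ k) {i t : ℕ}
    (hi : i < min m₁ (k - m₁)) (ht : t < 4*i+1) :
    (cylGrid k k).Adj (pv k st m₁ hk i t) (pv k st m₁ hk i (t+1)) := by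
  have hol := off_lt (k := k) (m₁ := m₁) t hi
  have hol' := off_lt (k := k) (m₁ := m₁) (t+1) hi
  have hrl := ring_lt (t := t) hk hi (by omega)
  have hrl' := ring_lt (t := t+1) hk hi (by omega)
  have hstep : (offFn m₁ i (t+1) = offFn m₁ i t ∧
      (ringFn k i t = ringFn k i (t+1) + 1 ∨ ringFn k i (t+1) = ringFn k i t + 1)) ∨
      (offFn m₁ i (t+1) = offFn m₁ i t + 1 ∧ ringFn k i (t+1) = ringFn k i t) := by
    unfold offFn ringFn; split_ifs <;> omega
  rcases hstep with ⟨h1, h2⟩ | ⟨h1, h2⟩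
  · refine ⟨?_, Or.inr ⟨?_, ?_⟩⟩
    · intro hcontra
      rw [Prod.ext_iff] at hcontra
      have h2' := congrArg Fin.val hcontra.2
      simp only [pv] at h2'
      rw [Nat.mod_eq_of_lt hrl, Nat.mod_eq_of_lt hrl'] at h2'
      omega
    · simp only [pv, h1]
    · simp only [pv]
      rw [Nat.mod_eq_of_lt hrl, Nat.mod_eq_of_lt hrl']
      omega
  · refine ⟨?_, Or.inl ⟨?_, Or.inl ?_⟩⟩
    · intro hcontra
      rw [Prod.ext_iff] at hcontra
      have h1' := congrArg Fin.val hcontra.1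
      simp only [pv] at h1'
      have := modcancel hol hol' h1'
      omega
    · simp only [pv, h2]
    · simp only [pv]
      rw [mod_succ _ _ hk, h1]
      ring_nf

lemma dpf_lower (k st m₁ : ℕ) (hk : 3 ≤ k)
    (X Y : Set (Fin k × Fin k))
    (hX : ∀ i, i < min m₁ (k - m₁) → pv k st m₁ hk i 0 ∈ X)
    (hY : ∀ i, i < min m₁ (k - m₁) → pv k st m₁ hk i (4*i+1) ∈ Y) :
    DisjointPathFamily (cylGrid k k) X Y (min m₁ (k - m₁)) := by
  refine ⟨fun i => pv k st m₁ hk i 0, fun i => pv k st m₁ hk i (4*i+1),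
    fun i => walkOfFn _ (pv k st m₁ hk i) (4*i+1) (fun t ht => pv_adj hk i.2 ht),
    fun i => hX i i.2, fun i => hY i i.2, ?_, ?_⟩
  · intro i
    rw [SimpleGraph.Walk.isPath_def, walkOfFn_support]
    refine List.Nodup.map_on ?_ List.nodup_range
    intro t ht s hs heq
    rw [List.mem_range] at ht hs
    exact (pv_inj hk i.2 i.2 (by omega) (by omega) heq).2
  · intro i j hij x hxi hxj
    rw [walkOfFn_support] at hxi hxj
    simp only [List.mem_map, List.mem_range] at hxi hxj
    obtain ⟨t, ht, rfl⟩ := hxi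
    obtain ⟨s, hs, heq⟩ := hxj
    exact hij (Fin.ext (pv_inj hk i.2 j.2 (by omega) (by omega) heq.symm).1)

/-- In the `(k,k)`-cylindrical grid, for every partition of the outermost cycle into two
nonempty arcs `X₁, X₂`, the maximum number of vertex-disjoint `(X₁,X₂)`-paths equals
`min(|X₁|,|X₂|)`. -/
theorem stmt16 (k : ℕ) (hk : 3 ≤ k) (X₁ X₂ : Finset (Fin k))
    (h1 : X₁.Nonempty) (h2 : X₂.Nonempty)
    (hdisj : Disjoint X₁ X₂) (hunion : X₁ ∪ X₂ = Finset.univ)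
    (ha1 : IsArc X₁) (ha2 : IsArc X₂) :
    mu (cylGrid k k)
        {p : Fin k × Fin k | p.2 = (⟨k - 1, by omega⟩ : Fin k) ∧ p.1 ∈ X₁}
        {p : Fin k × Fin k | p.2 = (⟨k - 1, by omega⟩ : Fin k) ∧ p.1 ∈ X₂}
      = min X₁.card X₂.card := by
  obtain ⟨st, len, hX1⟩ := ha1
  -- membership characterization of X₁
  have hmem : ∀ x : Fin k, x ∈ X₁ ↔ ∃ o, o < len ∧ ((st : ℕ) + o) % k = (x : ℕ) := by
    intro x
    rw [hX1]
    simp only [Finset.mem_image, Finset.mem_range]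
    constructor
    · rintro ⟨o, ho, rfl⟩; exact ⟨o, ho, rfl⟩
    · rintro ⟨o, ho, h⟩; exact ⟨o, ho, Fin.ext h⟩
  have hmem2 : ∀ x : Fin k, x ∈ X₂ ↔ x ∉ X₁ := by
    intro x
    constructor
    · intro hx hx1
      exact (Finset.disjoint_left.mp hdisj hx1) hx
    · intro hx
      have : x ∈ X₁ ∪ X₂ := hunion ▸ Finset.mem_univ x
      rw [Finset.mem_union] at this
      tauto
  -- len < k
  have hlenk : len < k := by
    by_contra h
    push_neg at h
    obtain ⟨x, hx⟩ := h2
    have hx1 : x ∈ X₁ := by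
      rw [hmem]
      refine ⟨((x : ℕ) + k - (st : ℕ)) % k, lt_of_lt_of_le (Nat.mod_lt _ (by omega)) h, ?_⟩
      rw [Nat.add_mod_mod]
      have hst := st.isLt
      have hxk := x.isLt
      have : (st : ℕ) + ((x : ℕ) + k - (st : ℕ)) = (x : ℕ) + k := by omega
      rw [this, Nat.add_mod_right, Nat.mod_eq_of_lt hxk]
    exact (hmem2 x).mp hx hx1
  have hlen1 : 1 ≤ len := by
    obtain ⟨x, hx⟩ := h1
    obtain ⟨o, ho, -⟩ := (hmem x).mp hx
    omega
  have hcard1 : X₁.card = len := by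
    rw [hX1, Finset.card_image_of_injOn, Finset.card_range]
    intro a ha b hb h
    rw [Finset.coe_range, Set.mem_Iio] at ha hb
    have := congrArg Fin.val h
    exact modcancel (by omega) (by omega) this
  have hcard2 : X₂.card = k - len := by
    have : X₁.card + X₂.card = k := by
      rw [← Finset.card_union_of_disjoint hdisj, hunion, Finset.card_univ, Fintype.card_fin]
    omega
  rw [hcard1, hcard2]
  set m := min len (k - len) with hm
  -- the set of achievable n
  have hub : ∀ n, DisjointPathFamily (cylGrid k k)
      {p : Fin k × Fin k | p.2 = (⟨k - 1, by omega⟩ : Fin k) ∧ p.1 ∈ X₁}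
      {p : Fin k × Fin k | p.2 = (⟨k - 1, by omega⟩ : Fin k) ∧ p.1 ∈ X₂} n → n ≤ m := by
    rintro n ⟨s, t, P, hs, ht, hp, hd⟩
    have hs_ne : ∀ i j, i ≠ j → s i ≠ s j := by
      intro i j hij heq
      have h2 : s i ∈ (P j).support := by rw [heq]; exact (P j).start_mem_support
      exact hd i j hij (s i) (P i).start_mem_support h2
    have ht_ne : ∀ i j, i ≠ j → t i ≠ t j := by
      intro i j hij heq
      have h2 : t i ∈ (P j).support := by rw [heq]; exact (P j).end_mem_support
      exact hd i j hij (t i) (P i).end_mem_support h2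
    have hn1 : n ≤ X₁.card := by
      have := Finset.card_le_card_of_injOn (s := (Finset.univ : Finset (Fin n)))
        (fun i => (s i).1) (fun i _ => (hs i).2) ?_
      · simpa using this
      · intro i _ j _ heq
        by_contra hij
        exact hs_ne i j hij (Prod.ext heq ((hs i).1.trans (hs j).1.symm))
    have hn2 : n ≤ X₂.card := by
      have := Finset.card_le_card_of_injOn (s := (Finset.univ : Finset (Fin n)))
        (fun i => (t i).1) (fun i _ => (ht i).2) ?_
      · simpa using this
      · intro i _ j _ heq
        by_contra hij
        exact ht_ne i j hij (Prod.ext heq ((ht i).1.trans (ht j).1.symm))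
    omega
  have hmemS : DisjointPathFamily (cylGrid k k)
      {p : Fin k × Fin k | p.2 = (⟨k - 1, by omega⟩ : Fin k) ∧ p.1 ∈ X₁}
      {p : Fin k × Fin k | p.2 = (⟨k - 1, by omega⟩ : Fin k) ∧ p.1 ∈ X₂} m := by
    refine dpf_lower k (st : ℕ) len hk _ _ ?_ ?_
    · intro i hi
      constructor
      · show (⟨ringFn k i 0 % k, _⟩ : Fin k) = ⟨k - 1, _⟩
        have : ringFn k i 0 = k - 1 := by unfold ringFn; split_ifs <;> omega
        exact Fin.ext (by simp [this, Nat.mod_eq_of_lt (show k - 1 < k by omega)])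
      · show (⟨((st : ℕ) + offFn len i 0) % k, _⟩ : Fin k) ∈ X₁
        rw [hmem]
        have : offFn len i 0 = len - 1 - i := by unfold offFn; split_ifs <;> omega
        exact ⟨len - 1 - i, by omega, by simp [this]⟩
    · intro i hi
      have hoff : offFn len i (4*i+1) = len + i := by unfold offFn; split_ifs <;> omega
      have hring : ringFn k i (4*i+1) = k - 1 := by unfold ringFn; split_ifs <;> omega
      constructor
      · show (⟨ringFn k i (4*i+1) % k, _⟩ : Fin k) = ⟨k - 1, _⟩
        exact Fin.ext (by simp [hring, Nat.mod_eq_of_lt (show k - 1 < k by omega)])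
      · show (⟨((st : ℕ) + offFn len i (4*i+1)) % k, _⟩ : Fin k) ∈ X₂
        rw [hmem2, hmem]
        rintro ⟨o, ho, heq⟩
        have heq' : ((st : ℕ) + o) % k = ((st : ℕ) + (len + i)) % k := by
          simpa [hoff] using heq
        have := modcancel (a := o) (b := len + i) (by omega) (by omega) heq'
        omega
  apply le_antisymm
  · exact csSup_le ⟨m, hmemS⟩ (fun n hn => hub n hn)
  · exact le_csSup ⟨m, fun n hn => hub n hn⟩ hmemS
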